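/- For integers p ≥ 2, q ≤ −2, r ≤ −2 with r(p+q) ≠ −pq, the abelian group G presented by generators μ₁, ν, λ and relations −(2|r|−1)μ₁ − (p−1)ν − (|q|+1)λ = 0, p·ν − |q|·λ = 0, −|r|·μ₁ − p·ν = 0 is finite, of order |det M| where M is the 3×3 relation matrix, and |det M| = |r·(p+q) + p·q| (up to sign as dictated by the substitutions |q| = −q, |r| = −r). -/

import Mathlib

/-- The cokernel `ℤⁿ / M ℤⁿ` of a square integer matrix `M`. -/
abbrev matrixCoker {n : ℕ} (M : Matrix (Fin n) (Fin n) ℤ) :=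
  (Fin n → ℤ) ⧸ LinearMap.range M.mulVecLin

lemma coker_finite_card {n : ℕ} (A : Matrix (Fin n) (Fin n) ℤ) (hA : A.det ≠ 0) :
    Finite (matrixCoker A) ∧ Nat.card (matrixCoker A) = A.det.natAbs := by
  classical
  set N : Submodule ℤ (Fin n → ℤ) := LinearMap.range A.mulVecLin with hN
  have hinj : Function.Injective A.mulVecLin := by
    intro v w hvw
    have h1 := congrArg A.adjugate.mulVec hvw
    simp only [Matrix.mulVecLin_apply, Matrix.mulVec_mulVec, Matrix.adjugate_mul,
      Matrix.smul_mulVec, Matrix.one_mulVec] at h1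
    exact smul_right_injective _ hA h1
  let e : (Fin n → ℤ) ≃ₗ[ℤ] N := LinearEquiv.ofInjective _ hinj
  have hidx : N.toAddSubgroup.index ≠ 0 :=
    Int.submodule_toAddSubgroup_index_ne_zero_iff.mpr ⟨e.symm⟩
  have hcard : Nat.card (matrixCoker A) = N.toAddSubgroup.index := rfl
  refine ⟨Nat.finite_of_card_ne_zero (by rw [hcard]; exact hidx), ?_⟩
  obtain ⟨m, snf⟩ := N.smithNormalForm (Pi.basisFun ℤ (Fin n))
  have hm : m = n := by simpa using snf.toAddSubgroup_index_ne_zero_iff.mp hidx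
  subst hm
  have hidx_eq : N.toAddSubgroup.index = ∏ i, (snf.a i).natAbs := by
    rw [snf.toAddSubgroup_index_eq_pow_mul_prod]
    simp [Int.index_zmultiples]
  have hφ : Function.Bijective snf.f := Finite.injective_iff_bijective.mp snf.f.injective
  set φ : Fin m ≃ Fin m := Equiv.ofBijective snf.f hφ with hφdef
  set b : Module.Basis (Fin m) ℤ (Fin m → ℤ) := Pi.basisFun ℤ (Fin m) with hb
  set c1 : Module.Basis (Fin m) ℤ N := b.map e with hc1
  set c2 : Module.Basis (Fin m) ℤ N := snf.bN.reindex φ with hc2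
  have hdet1 : b.det (N.subtype ∘ c1) = A.det := by
    rw [Module.Basis.det_apply]
    congr 1
    ext i j
    have key : (((e (Pi.single j 1)) : ↥N) : Fin m → ℤ) = A.mulVec (Pi.single j 1) := rfl
    simp only [Module.Basis.toMatrix_apply, hc1, hb, Function.comp_apply, Module.Basis.map_apply,
      Submodule.coe_subtype, Pi.basisFun_apply, Pi.basisFun_repr, key,
      Matrix.mulVec_single_one, Matrix.transpose_apply, Matrix.col_apply]
  have hc2' : (N.subtype ∘ c2) = fun j => snf.a (φ.symm j) • snf.bM j := by
    funext j
    simp only [Function.comp_apply, hc2, Module.Basis.coe_reindex, Submodule.coe_subtype, snf.snf]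
    rw [hφdef, Equiv.ofBijective_apply_symm_apply (⇑snf.f) hφ j]
  have hdet2 : b.det (N.subtype ∘ c2) = (∏ j, snf.a (φ.symm j)) * b.det (fun j => snf.bM j) := by
    rw [hc2']
    simpa using b.det.toMultilinearMap.map_smul_univ (fun j => snf.a (φ.symm j)) (fun j => snf.bM j)
  have hassoc : Associated (b.det (N.subtype ∘ c1)) (b.det (N.subtype ∘ c2)) := by
    rw [Module.Basis.det_comp_basis c1 b N.subtype, Module.Basis.det_comp_basis c2 b N.subtype]
    exact LinearMap.associated_det_comp_equiv _ _ _
  have hna : A.det.natAbs = (b.det (N.subtype ∘ c2)).natAbs := by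
    rw [← hdet1]
    exact Int.natAbs_eq_iff_associated.mpr hassoc
  have hunit : (b.det (⇑snf.bM)).natAbs = 1 := by
    rcases Int.isUnit_iff.mp (b.isUnit_det snf.bM) with h1 | h1 <;> rw [h1] <;> rfl
  rw [hcard, hidx_eq, hna, hdet2, Int.natAbs_mul, hunit, mul_one]
  have : (∏ j, snf.a (φ.symm j)).natAbs = ∏ j, (snf.a (φ.symm j)).natAbs :=
    map_prod Int.natAbsHom _ _
  rw [this, Equiv.prod_comp φ.symm (fun i => (snf.a i).natAbs)]

/-- The relation matrix of the presentation of `H₁(Y(p,q,r))` from Section 4 of the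
paper (case `p ≥ 2`, `q ≤ -2`, `r ≤ -2`). -/
def M14 (p q r : ℤ) : Matrix (Fin 3) (Fin 3) ℤ :=
  !![-(2 * |r| - 1), -(p - 1), -(|q| + 1);
     0, p, -|q|;
     -|r|, -p, 0]

/-- For `p ≥ 2`, `q ≤ -2`, `r ≤ -2` with `r(p+q) ≠ -pq`, the abelian group presented
by the relation matrix `M` is finite of order `|det M|`, and `|det M| = |r(p+q) + pq|`. -/
theorem H1_Ypqr_finite (p q r : ℤ) (hp : 2 ≤ p) (hq : q ≤ -2) (hr : r ≤ -2)
    (h : r * (p + q) ≠ -(p * q)) :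
    Finite (matrixCoker (M14 p q r)) ∧
      Nat.card (matrixCoker (M14 p q r)) = (M14 p q r).det.natAbs ∧
      (M14 p q r).det.natAbs = (r * (p + q) + p * q).natAbs := by
  have hq' : |q| = -q := abs_of_nonpos (by linarith)
  have hr' : |r| = -r := abs_of_nonpos (by linarith)
  have hdet : (M14 p q r).det = r * (p + q) + p * q := by
    rw [M14, hq', hr', Matrix.det_fin_three]
    simp [Matrix.cons_val_zero, Matrix.cons_val_one]
    ring
  have hne : (M14 p q r).det ≠ 0 := by
    rw [hdet]
    intro h0
    exact h (by linarith)
  obtain ⟨hf, hc⟩ := coker_finite_card _ hne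
  exact ⟨hf, hc, by rw [hdet]⟩
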